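/- arXiv:1104.1808 — 7 statements merged into one kernel-verified Lean document; each statement's English description precedes it below -/
import Mathlib

section
/- Let p be a differentiable, positive, strictly increasing function on ℝ₊ and let S be an absolutely continuous nonnegative function satisfying S'(t) + p(S(t)) ≤ 0 for all t ≥ 0, with S(0) > 0. Define ψ(x) = ∫ₓ^{S(0)} ds / p(s) for x ∈ (0, S(0)], which is strictly decreasing with ψ(x) → ∞ as x → 0⁺. Then S(t) ≤ ψ⁻¹(t) for every t ≥ 0. -/
open MeasureTheory Set

/-- Unforced decay: if S' + p(S) ≤ 0 then S(t) ≤ ψ⁻¹(t) where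
ψ(x) = ∫ₓ^{S(0)} ds / p(s). -/
theorem stmt_1
    (p : ℝ → ℝ) (hpdiff : DifferentiableOn ℝ p (Ici 0))
    (hppos : ∀ x > (0:ℝ), 0 < p x) (hpmono : StrictMonoOn p (Ici 0))
    (S S' : ℝ → ℝ) (hSnn : ∀ t ≥ (0:ℝ), 0 ≤ S t) (hS0 : 0 < S 0)
    (hSder : ∀ t ≥ (0:ℝ), HasDerivAt S (S' t) t)
    (hSineq : ∀ t ≥ (0:ℝ), S' t + p (S t) ≤ 0)
    (ψ : ℝ → ℝ) (hψ : ∀ x, ψ x = ∫ s in x..(S 0), 1 / p s)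
    (hψdecr : StrictAntiOn ψ (Ioc 0 (S 0)))
    (hψlim : Filter.Tendsto ψ (nhdsWithin 0 (Ioi 0)) Filter.atTop)
    (ψinv : ℝ → ℝ)
    (hψinv : ∀ t ≥ (0:ℝ), ψinv t ∈ Ioc 0 (S 0) ∧ ψ (ψinv t) = t) :
    ∀ t ≥ (0:ℝ), S t ≤ ψinv t := by
  have hpc : ContinuousOn p (Ici 0) := hpdiff.continuousOn
  -- continuity of 1/p on Ioi 0
  have hfc : ∀ x ∈ Ioi (0:ℝ), ContinuousAt (fun s => 1 / p s) x := by
    intro x hx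
    have hpx : ContinuousAt p x := hpc.continuousAt (Ici_mem_nhds hx)
    exact continuousAt_const.div hpx (ne_of_gt (hppos x hx))
  -- p 0 ≥ 0
  have hp0 : 0 ≤ p 0 := by
    have htd : Filter.Tendsto p (nhdsWithin 0 (Ioi 0)) (nhds (p 0)) :=
      (hpc 0 self_mem_Ici).mono_left (nhdsWithin_mono _ Ioi_subset_Ici_self)
    exact ge_of_tendsto htd (eventually_mem_nhdsWithin.mono fun x hx => (hppos x hx).le)
  have hpnn : ∀ u ≥ (0:ℝ), 0 ≤ p (S u) := by
    intro u hu
    exact hp0.trans (hpmono.monotoneOn self_mem_Ici (hSnn u hu) (hSnn u hu))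
  -- S antitone on Ici 0
  have hSanti : AntitoneOn S (Ici 0) := by
    apply antitoneOn_of_deriv_nonpos (convex_Ici 0)
    · exact fun u hu => (hSder u hu).continuousAt.continuousWithinAt
    · intro u hu
      rw [interior_Ici] at hu
      exact (hSder u (le_of_lt hu)).differentiableAt.differentiableWithinAt
    · intro u hu
      rw [interior_Ici] at hu
      rw [(hSder u hu.le).deriv]
      have h1 := hSineq u hu.le
      have h2 := hpnn u hu.le
      linarith
  intro t ht
  by_contra hcon
  push_neg at hcon
  have hinv := hψinv t ht
  have hSt0 : 0 < S t := lt_trans hinv.1.1 hcon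
  -- bounds on S u for u ∈ Icc 0 t
  have hSb : ∀ u ∈ Icc (0:ℝ) t, S t ≤ S u ∧ S u ≤ S 0 := by
    intro u hu
    exact ⟨hSanti (mem_Ici.2 hu.1) (mem_Ici.2 ht) hu.2,
      hSanti self_mem_Ici (mem_Ici.2 hu.1) hu.1⟩
  -- derivative of ψ
  have hψd : ∀ x, 0 < x → x ≤ S 0 → HasDerivAt ψ (-(1 / p x)) x := by
    intro x hx hx0
    have hψeq : ψ = fun y => ∫ s in y..(S 0), 1 / p s := funext hψ
    rw [hψeq]
    have hsub : Icc x (S 0) ⊆ Ioi (0:ℝ) := fun y hy => lt_of_lt_of_le hx hy.1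
    have hcont : ContinuousOn (fun s => 1 / p s) (Icc x (S 0)) :=
      fun y hy => ((hfc y (hsub hy)).continuousWithinAt)
    have hint : IntervalIntegrable (fun s => 1 / p s) volume x (S 0) := by
      apply ContinuousOn.intervalIntegrable
      rwa [uIcc_of_le hx0]
    exact intervalIntegral.integral_hasDerivAt_left hint
      (ContinuousAt.stronglyMeasurableAtFilter isOpen_Ioi hfc x hx)
      (hfc x hx)
  -- G := ψ ∘ S - id has nonneg derivative on Icc 0 t
  have hGd : ∀ u ∈ Icc (0:ℝ) t, HasDerivAt (fun u => ψ (S u) - u)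
      (-(1 / p (S u)) * S' u - 1) u := by
    intro u hu
    have hb := hSb u hu
    have h1 : HasDerivAt (fun u => ψ (S u)) (-(1 / p (S u)) * S' u) u :=
      (hψd (S u) (lt_of_lt_of_le hSt0 hb.1) hb.2).comp u (hSder u hu.1)
    simpa using h1.fun_sub (hasDerivAt_id' (x := u))
  have hGd' : ∀ u ∈ Icc (0:ℝ) t, 0 ≤ -(1 / p (S u)) * S' u - 1 := by
    intro u hu
    have hb := hSb u hu
    have hpu : 0 < p (S u) := hppos _ (lt_of_lt_of_le hSt0 hb.1)
    have h1 := hSineq u hu.1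
    have key : 1 ≤ -(1 / p (S u)) * S' u := by
      have h2 : 1 ≤ -(S' u) / p (S u) := (one_le_div hpu).2 (by linarith)
      calc (1:ℝ) ≤ -(S' u) / p (S u) := h2
      _ = -(1 / p (S u)) * S' u := by ring
    linarith
  -- G monotone, so ψ (S t) ≥ t
  have hGmono : MonotoneOn (fun u => ψ (S u) - u) (Icc 0 t) := by
    apply monotoneOn_of_deriv_nonneg (convex_Icc 0 t)
    · exact fun u hu => (hGd u hu).continuousAt.continuousWithinAt
    · intro u hu
      exact (hGd u (interior_subset hu)).differentiableAt.differentiableWithinAt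
    · intro u hu
      rw [(hGd u (interior_subset hu)).deriv]
      exact hGd' u (interior_subset hu)
  have hψS0 : ψ (S 0) = 0 := by rw [hψ, intervalIntegral.integral_same]
  have hGle : ψ (S 0) - 0 ≤ ψ (S t) - t :=
    hGmono (left_mem_Icc.2 ht) (right_mem_Icc.2 ht) ht
  have htle : t ≤ ψ (S t) := by rw [hψS0] at hGle; linarith
  -- contradiction with strict anti
  have hStmem : S t ∈ Ioc 0 (S 0) := ⟨hSt0, (hSb t (right_mem_Icc.2 ht)).2⟩
  have := hψdecr hinv.1 hStmem hcon
  rw [hinv.2] at this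
  linarith
end

section
/- Let p be a differentiable, positive, strictly increasing function on ℝ₊ such that p(x) ≤ m₁ x for x ∈ [0, η] (some m₁ > 0, 0 < η ≪ 1) and such that p(Kx) ≥ m·p(K)·p(x) for some m > 0, all K ≥ 1 and all x ≥ 0. Let Γ ∈ C¹(ℝ₊) be positive, and suppose S satisfies S'(t) + p(S(t)) ≤ Γ(t), S(0) ≥ 0. Assume there exist c > 0 and κ ≥ 1 such that (d/dt)(p⁻¹(Γ(t))) + c·Γ(t) < 0 for all t ≥ 0, m·p(κ) − κ·c − 1 ≥ 0, and κ·p⁻¹(Γ(0)) ≥ S(0). Define ψ(x) = ∫ₓ^{p⁻¹(Γ(0))} ds/p(s). Then S(t) ≤ κ·ψ⁻¹(c t) for all t ≥ 0. -/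
open MeasureTheory Set
open Topology Filter

/-- Forced decay, case (2a): fast-decaying forcing gives the unforced
decay rate ψ⁻¹(ct) up to the constant κ. -/
theorem stmt_2
    (p : ℝ → ℝ) (hpdiff : DifferentiableOn ℝ p (Ici 0))
    (hppos : ∀ x > (0:ℝ), 0 < p x) (hpmono : StrictMonoOn p (Ici 0))
    (m₁ η : ℝ) (hm₁ : 0 < m₁) (hη : 0 < η) (hη1 : η < 1)
    (hplin : ∀ x ∈ Icc (0:ℝ) η, p x ≤ m₁ * x)
    (m : ℝ) (hm : 0 < m)
    (hphom : ∀ K ≥ (1:ℝ), ∀ x ≥ (0:ℝ), m * p K * p x ≤ p (K * x))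
    (Γ : ℝ → ℝ) (hΓC1 : ContDiffOn ℝ 1 Γ (Ici 0)) (hΓpos : ∀ t ≥ (0:ℝ), 0 < Γ t)
    (S S' : ℝ → ℝ) (hS0 : 0 ≤ S 0) (hSnn : ∀ t ≥ (0:ℝ), 0 ≤ S t)
    (hSder : ∀ t ≥ (0:ℝ), HasDerivAt S (S' t) t)
    (hSineq : ∀ t ≥ (0:ℝ), S' t + p (S t) ≤ Γ t)
    (pinv : ℝ → ℝ) (hpinv : ∀ x ≥ (0:ℝ), pinv (p x) = x)
    (hpinvΓ : ∀ t ≥ (0:ℝ), 0 ≤ pinv (Γ t) ∧ p (pinv (Γ t)) = Γ t)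
    (c κ : ℝ) (hc : 0 < c) (hκ : 1 ≤ κ)
    (D : ℝ → ℝ)
    (hD : ∀ t ≥ (0:ℝ), HasDerivAt (fun s => pinv (Γ s)) (D t) t)
    (hDineq : ∀ t ≥ (0:ℝ), D t + c * Γ t < 0)
    (hκ1 : 0 ≤ m * p κ - κ * c - 1)
    (hκ2 : S 0 ≤ κ * pinv (Γ 0))
    (ψ : ℝ → ℝ) (hψ : ∀ x, ψ x = ∫ s in x..(pinv (Γ 0)), 1 / p s)
    (ψinv : ℝ → ℝ)
    (hψinv : ∀ t ≥ (0:ℝ), ψinv t ∈ Ioc 0 (pinv (Γ 0)) ∧ ψ (ψinv t) = t) :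
    ∀ t ≥ (0:ℝ), S t ≤ κ * ψinv (c * t) := by
  have hκpos : (0:ℝ) < κ := lt_of_lt_of_le one_pos hκ
  have hp0 : p 0 ≤ 0 := by
    have := hplin 0 ⟨le_refl _, hη.le⟩; linarith
  -- positivity of pinv (Γ t)
  have hg : ∀ t ≥ (0:ℝ), 0 < pinv (Γ t) := by
    intro t ht
    rcases hpinvΓ t ht with ⟨h1, h2⟩
    rcases h1.lt_or_eq with h | h
    · exact h
    · exfalso; have := hΓpos t ht; rw [← h2, ← h] at this; linarith
  set g0 : ℝ := pinv (Γ 0) with hg0def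
  have hg0 : 0 < g0 := hg 0 le_rfl
  -- continuity of p on (0,∞)
  have hpcont : ∀ x : ℝ, 0 < x → ContinuousAt p x := by
    intro x hx
    have : DifferentiableAt ℝ p x :=
      (hpdiff x (le_of_lt hx)).differentiableAt (Ici_mem_nhds hx)
    exact this.continuousAt
  -- continuity of 1/p on (0,∞)
  have hfc : ∀ x : ℝ, 0 < x → ContinuousAt (fun s => 1 / p s) x := by
    intro x hx
    exact continuousAt_const.div (hpcont x hx) (ne_of_gt (hppos x hx))
  have hfcOn : ContinuousOn (fun s => 1 / p s) (Ioi 0) :=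
    fun x hx => (hfc x hx).continuousWithinAt
  -- interval integrability of 1/p between positive points
  have hint : ∀ a b : ℝ, 0 < a → 0 < b →
      IntervalIntegrable (fun s => 1 / p s) volume a b := by
    intro a b ha hb
    apply ContinuousOn.intervalIntegrable
    apply hfcOn.mono
    intro y hy
    rcases mem_uIcc.mp hy with h | h
    · exact lt_of_lt_of_le ha h.1
    · exact lt_of_lt_of_le hb h.1
  -- derivative of ψ
  have hψd : ∀ x : ℝ, 0 < x → HasDerivAt ψ (-(1 / p x)) x := by
    intro x hx
    have hF : HasDerivAt (fun u => ∫ s in g0..u, 1 / p s) (1 / p x) x := by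
      apply intervalIntegral.integral_hasDerivAt_right (hint g0 x hg0 hx)
      · exact ContinuousOn.stronglyMeasurableAtFilter isOpen_Ioi hfcOn x hx
      · exact hfc x hx
    have heq : ψ = fun u => -∫ s in g0..u, 1 / p s := by
      funext u
      rw [hψ u]
      exact intervalIntegral.integral_symm g0 u
    rw [heq]
    exact hF.neg
  have hψcont : ∀ x : ℝ, 0 < x → ContinuousAt ψ x := fun x hx => (hψd x hx).continuousAt
  have hψg0 : ψ g0 = 0 := by rw [hψ, intervalIntegral.integral_same]
  -- strict antitonicity of ψ on (0,∞)
  have hψanti : ∀ a b : ℝ, 0 < a → a < b → ψ b < ψ a := by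
    intro a b ha hab
    have hb : 0 < b := ha.trans hab
    have hsplit : (∫ s in a..b, 1 / p s) + ∫ s in b..g0, 1 / p s = ∫ s in a..g0, 1 / p s :=
      intervalIntegral.integral_add_adjacent_intervals (hint a b ha hb) (hint b g0 hb hg0)
    have hpos : 0 < ∫ s in a..b, 1 / p s := by
      apply intervalIntegral.intervalIntegral_pos_of_pos_on (hint a b ha hb) _ hab
      intro x hx
      exact div_pos one_pos (hppos x (ha.trans hx.1))
    rw [hψ a, hψ b]
    linarith
  have hψle : ∀ a b : ℝ, 0 < a → a ≤ b → ψ b ≤ ψ a := by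
    intro a b ha hab
    rcases hab.lt_or_eq with h | h
    · exact (hψanti a b ha h).le
    · rw [h]
  have hψinj : ∀ a b : ℝ, 0 < a → 0 < b → ψ a ≤ ψ b → b ≤ a := by
    intro a b ha hb h
    by_contra hba
    push_neg at hba
    exact absurd h (not_le.mpr (hψanti a b ha hba))
  -- facts about ψinv ∘ (c * ·)
  have hy : ∀ t ≥ (0:ℝ), 0 < ψinv (c * t) ∧ ψinv (c * t) ≤ g0 ∧ ψ (ψinv (c * t)) = c * t := by
    intro t ht
    rcases hψinv (c * t) (mul_nonneg hc.le ht) with ⟨⟨h1, h2⟩, h3⟩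
    exact ⟨h1, h2, h3⟩
  -- ψinv is antitone on the relevant range
  have hyanti : ∀ s t : ℝ, 0 ≤ s → s ≤ t → ψinv (c * t) ≤ ψinv (c * s) := by
    intro s t hs hst
    rcases hy s hs with ⟨h1, _, h3⟩
    rcases hy t (hs.trans hst) with ⟨h1', _, h3'⟩
    apply hψinj _ _ h1 h1'
    rw [h3, h3']
    exact mul_le_mul_of_nonneg_left hst hc.le
  -- Step 1 : ψ (pinv (Γ t)) ≥ c t
  have step1 : ∀ t ≥ (0:ℝ), c * t ≤ ψ (pinv (Γ t)) := by
    intro t ht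
    set W : ℝ → ℝ := fun s => ψ (pinv (Γ s)) - c * s with hW
    have hWd : ∀ s ≥ (0:ℝ),
        HasDerivAt W (-(1 / p (pinv (Γ s))) * D s - c) s := by
      intro s hs
      have h1 : HasDerivAt (fun u => ψ (pinv (Γ u))) (-(1 / p (pinv (Γ s))) * D s) s :=
        (hψd _ (hg s hs)).comp s (hD s hs)
      have h2 : HasDerivAt (fun u => c * u) c s := by
        simpa using (hasDerivAt_id s).const_mul c
      exact h1.sub h2
    have hWpos : ∀ s ∈ interior (Ici (0:ℝ)), 0 < deriv W s := by
      intro s hs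
      rw [interior_Ici] at hs
      have hs' : (0:ℝ) ≤ s := le_of_lt hs
      rw [(hWd s hs').deriv]
      have hΓs := hΓpos s hs'
      have hPs : p (pinv (Γ s)) = Γ s := (hpinvΓ s hs').2
      have hDs := hDineq s hs'
      rw [hPs]
      have : D s < -(c * Γ s) := by linarith
      have h3 : -(1 / Γ s) * D s > -(1 / Γ s) * (-(c * Γ s)) := by
        apply mul_lt_mul_of_neg_left this
        simp only [neg_neg, neg_lt, neg_zero]
        exact div_pos one_pos hΓs
      have h4 : -(1 / Γ s) * (-(c * Γ s)) = c := by field_simp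
      linarith [h3, h4.symm.le]
    have hWc : ContinuousOn W (Ici 0) :=
      fun s hs => ((hWd s hs).continuousAt).continuousWithinAt
    have hmono := strictMonoOn_of_deriv_pos (convex_Ici 0) hWc hWpos
    have hW0 : W 0 = 0 := by
      simp only [hW]
      rw [hψg0]; ring
    rcases ht.lt_or_eq with h | h
    · have := (hmono (self_mem_Ici) (le_of_lt h : (0:ℝ) ≤ t) h).le
      rw [hW0] at this
      simp only [hW] at this
      linarith
    · rw [← h]; rw [mul_zero, ← hg0def, hψg0]
  -- Step 2 : Γ t ≤ p (ψinv (c t))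
  have step2 : ∀ t ≥ (0:ℝ), Γ t ≤ p (ψinv (c * t)) := by
    intro t ht
    rcases hy t ht with ⟨hy1, hy2, hy3⟩
    have hgy : pinv (Γ t) ≤ ψinv (c * t) := by
      apply hψinj _ _ hy1 (hg t ht)
      rw [hy3]
      exact step1 t ht
    have := (hpinvΓ t ht).2
    rw [← this]
    rcases hgy.lt_or_eq with h | h
    · exact (hpmono (le_of_lt (hg t ht)) (le_of_lt hy1) h).le
    · rw [h]
  -- continuity of S on [0,∞)
  have hScont : ∀ t ≥ (0:ℝ), ContinuousAt S t := fun t ht => (hSder t ht).continuousAt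
  -- Main claim: ∀ t ≥ 0 with S t > 0, ψ (S t / κ) ≥ c t
  have main : ∀ t ≥ (0:ℝ), 0 < S t → c * t ≤ ψ (S t / κ) := by
    intro t₁ ht₁ hSt₁
    by_contra hcon
    push_neg at hcon
    obtain ⟨ε, hε, hcon⟩ : ∃ ε > (0:ℝ), c * t₁ - ε > ψ (S t₁ / κ) :=
      ⟨(c * t₁ - ψ (S t₁ / κ)) / 2, by linarith, by linarith⟩
    -- barrier set
    set A : Set ℝ := {t | t ∈ Icc 0 t₁ ∧ (S t = 0 ∨ c * t - ε ≤ ψ (S t / κ))} with hA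
    have h0A : (0:ℝ) ∈ A := by
      refine ⟨⟨le_refl _, ht₁⟩, ?_⟩
      rcases hS0.lt_or_eq with h | h
      · right
        have hS0κ : S 0 / κ ≤ g0 := by
          rw [div_le_iff₀ hκpos]
          linarith [hκ2, mul_comm κ g0]
        have := hψle _ _ (div_pos h hκpos) hS0κ
        rw [hψg0] at this
        linarith
      · exact Or.inl h.symm
    have hAbdd : BddAbove A := ⟨t₁, fun x hx => hx.1.2⟩
    have hAclosed : IsClosed A := by
      apply IsSeqClosed.isClosed
      intro x t hxA hxt
      have htIcc : t ∈ Icc 0 t₁ :=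
        isClosed_Icc.isSeqClosed (fun n => (hxA n).1) hxt
      refine ⟨htIcc, ?_⟩
      rcases (hSnn t htIcc.1).lt_or_eq with hSt | hSt
      · right
        have hStend : Filter.Tendsto (fun n => S (x n)) Filter.atTop (𝓝 (S t)) :=
          ((hScont t htIcc.1).tendsto.comp hxt)
        have hev : ∀ᶠ n in Filter.atTop, 0 < S (x n) :=
          hStend (Ioi_mem_nhds hSt)
        have hev2 : ∀ᶠ n in Filter.atTop, c * x n - ε ≤ ψ (S (x n) / κ) := by
          filter_upwards [hev] with n hn
          rcases (hxA n).2 with h | h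
          · rw [h] at hn; exact absurd hn (lt_irrefl 0)
          · exact h
        have hl : Filter.Tendsto (fun n => c * x n - ε) Filter.atTop (𝓝 (c * t - ε)) :=
          ((hxt.const_mul c).sub_const ε)
        have hr : Filter.Tendsto (fun n => ψ (S (x n) / κ)) Filter.atTop (𝓝 (ψ (S t / κ))) := by
          have h1 : Filter.Tendsto (fun n => S (x n) / κ) Filter.atTop (𝓝 (S t / κ)) :=
            hStend.div_const κ
          exact ((hψcont _ (div_pos hSt hκpos)).tendsto.comp h1)
        exact le_of_tendsto_of_tendsto hl hr hev2
      · exact Or.inl hSt.symm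
    set t₀ : ℝ := sSup A with ht₀def
    have ht₀A : t₀ ∈ A := hAclosed.csSup_mem ⟨0, h0A⟩ hAbdd
    have ht₀0 : 0 ≤ t₀ := ht₀A.1.1
    have ht₀t₁ : t₀ < t₁ := by
      rcases ht₀A.1.2.lt_or_eq with h | h
      · exact h
      · exfalso
        rcases ht₀A.2 with h2 | h2
        · rw [h] at h2; rw [h2] at hSt₁; exact absurd hSt₁ (lt_irrefl 0)
        · rw [h] at h2; linarith
    -- a point slightly above t₀ in A yields a contradiction
    have hsup : ∀ t' ∈ A, t' ≤ t₀ := fun t' ht' => le_csSup hAbdd ht'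
    -- helper: membership in A from S t < κ * ψinv (c t)
    have hmemA : ∀ t ∈ Icc (0:ℝ) t₁, S t ≤ κ * ψinv (c * t) → t ∈ A := by
      intro t htIcc hle
      refine ⟨htIcc, ?_⟩
      rcases (hSnn t htIcc.1).lt_or_eq with hSt | hSt
      · right
        rcases hy t htIcc.1 with ⟨hy1, hy2, hy3⟩
        have h1 : S t / κ ≤ ψinv (c * t) := by
          rw [div_le_iff₀ hκpos]; linarith [mul_comm κ (ψinv (c * t))]
        have := hψle _ _ (div_pos hSt hκpos) h1
        rw [hy3] at this
        linarith
      · exact Or.inl hSt.symm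
    rcases (hSnn t₀ ht₀0).lt_or_eq with hSt₀ | hSt₀
    · -- S t₀ > 0
      have hx₀ : 0 < S t₀ / κ := div_pos hSt₀ hκpos
      rcases ht₀A.2 with hcase | hcase
      · rw [hcase] at hSt₀; exact absurd hSt₀ (lt_irrefl 0)
      rcases hcase.lt_or_eq with hstrict | htouch
      · -- strict inequality at t₀ : continuity argument
        have hc1 : ContinuousAt (fun t => S t / κ) t₀ := (hScont t₀ ht₀0).div_const κ
        have hc2 : ContinuousAt (fun t => ψ (S t / κ)) t₀ :=
          Filter.Tendsto.comp (hψcont _ hx₀).tendsto hc1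
        have hcontH : ContinuousAt (fun t => ψ (S t / κ) - (c * t - ε)) t₀ :=
          hc2.sub ((continuousAt_id.const_mul c).sub continuousAt_const)
        have hev : ∀ᶠ t in 𝓝 t₀, 0 < ψ (S t / κ) - (c * t - ε) :=
          Filter.Tendsto.eventually_const_lt (by linarith) hcontH
        rcases Filter.eventually_iff_exists_mem.mp hev with ⟨U, hU, hUprop⟩
        rcases Metric.mem_nhds_iff.mp hU with ⟨δ, hδ, hball⟩
        set t' : ℝ := min (t₀ + δ / 2) ((t₀ + t₁) / 2) with ht'
        have ht'gt : t₀ < t' := lt_min (by linarith) (by linarith)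
        have ht'le : t' ≤ t₁ := le_trans (min_le_right _ _) (by linarith)
        have ht'U : t' ∈ U := by
          apply hball
          simp only [Metric.mem_ball, Real.dist_eq, abs_lt]
          constructor
          · linarith [min_le_right (t₀ + δ / 2) ((t₀ + t₁) / 2)]
          · have := min_le_left (t₀ + δ / 2) ((t₀ + t₁) / 2); linarith
        have : t' ∈ A := ⟨⟨le_trans ht₀0 ht'gt.le, ht'le⟩, Or.inr (by linarith [hUprop t' ht'U])⟩
        linarith [hsup t' this]
      · -- touching case : derivative argument
        rcases hy t₀ ht₀0 with ⟨hy1, hy2, hy3⟩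
        have hyx₀ : ψinv (c * t₀) < S t₀ / κ := by
          by_contra hle
          push_neg at hle
          have := hψle _ _ hx₀ hle
          rw [hy3] at this
          linarith [htouch]
        have hpx₀ : 0 < p (S t₀ / κ) := hppos _ hx₀
        have hSval : κ * (S t₀ / κ) = S t₀ := by field_simp
        have hpS : m * p κ * p (S t₀ / κ) ≤ p (S t₀) := by
          have h := hphom κ hκ _ hx₀.le
          rwa [hSval] at h
        have hΓt₀ : Γ t₀ < p (S t₀ / κ) := by
          have h1 := step2 t₀ ht₀0
          have h2 : p (ψinv (c * t₀)) < p (S t₀ / κ) := hpmono hy1.le hx₀.le hyx₀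
          linarith
        have hS'neg : S' t₀ < -(κ * c * p (S t₀ / κ)) := by
          have h1 := hSineq t₀ ht₀0
          have h2 : (1 - m * p κ) * p (S t₀ / κ) ≤ -(κ * c) * p (S t₀ / κ) := by
            apply mul_le_mul_of_nonneg_right _ hpx₀.le
            linarith
          nlinarith [hpS, hΓt₀]
        -- derivative of h at t₀
        have hdpos : 0 < -(1 / p (S t₀ / κ)) * (S' t₀ / κ) - c := by
          have hkey : -(1 / p (S t₀ / κ)) * (S' t₀ / κ) - c
              = (-(S' t₀) - κ * c * p (S t₀ / κ)) / (κ * p (S t₀ / κ)) := by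
            field_simp
          rw [hkey]
          apply div_pos _ (mul_pos hκpos hpx₀)
          linarith
        have hhd : HasDerivAt (fun t => ψ (S t / κ) - (c * t - ε))
            (-(1 / p (S t₀ / κ)) * (S' t₀ / κ) - c) t₀ := by
          have h1 : HasDerivAt (fun t => ψ (S t / κ)) (-(1 / p (S t₀ / κ)) * (S' t₀ / κ)) t₀ :=
            (hψd _ hx₀).comp t₀ ((hSder t₀ ht₀0).div_const κ)
          have h2 : HasDerivAt (fun t => c * t - ε) c t₀ := by
            simpa using ((hasDerivAt_id t₀).const_mul c).sub_const ε
          exact h1.sub h2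
        -- slope argument
        have hslope := hasDerivAt_iff_tendsto_slope.mp hhd
        have hevs : ∀ᶠ t in 𝓝[≠] t₀, 0 < slope (fun t => ψ (S t / κ) - (c * t - ε)) t₀ t :=
          hslope (Ioi_mem_nhds hdpos)
        have hevs' : ∀ᶠ t in 𝓝[>] t₀, 0 < slope (fun t => ψ (S t / κ) - (c * t - ε)) t₀ t :=
          hevs.filter_mono (nhdsWithin_mono t₀ (fun x hx => ne_of_gt hx))
        have hevIoo : ∀ᶠ t in 𝓝[>] t₀, t ∈ Ioo t₀ t₁ :=
          Filter.eventually_of_mem (Ioo_mem_nhdsGT_of_mem ⟨le_refl _, ht₀t₁⟩) (fun x hx => hx)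
        rcases (hevs'.and hevIoo).exists with ⟨t', hslope', ht'Ioo⟩
        have hIoo1 : t₀ < t' := ht'Ioo.1
        have hIoo2 : t' < t₁ := ht'Ioo.2
        have hval : 0 < (ψ (S t' / κ) - (c * t' - ε)) - (ψ (S t₀ / κ) - (c * t₀ - ε)) := by
          have h1 : slope (fun t => ψ (S t / κ) - (c * t - ε)) t₀ t'
              = ((ψ (S t' / κ) - (c * t' - ε)) - (ψ (S t₀ / κ) - (c * t₀ - ε))) / (t' - t₀) := by
            rw [slope_def_field]
          have h2 : 0 < t' - t₀ := by linarith
          rw [h1] at hslope'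
          rcases div_pos_iff.mp hslope' with ⟨h3, _⟩ | ⟨_, h4⟩
          · exact h3
          · linarith
        have hAt' : t' ∈ A := by
          refine ⟨⟨le_trans ht₀0 hIoo1.le, hIoo2.le⟩, Or.inr ?_⟩
          linarith [htouch, hval]
        linarith [hsup t' hAt']
    · -- S t₀ = 0 : continuity argument with ρ = ψinv (c t₁)
      set ρ : ℝ := ψinv (c * t₁) with hρ
      have hρpos : 0 < ρ := (hy t₁ ht₁).1
      have hcont := hScont t₀ ht₀0
      have hev : ∀ᶠ t in 𝓝 t₀, S t < κ * ρ := by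
        apply Filter.Tendsto.eventually_lt_const _ hcont
        rw [← hSt₀]
        exact mul_pos hκpos hρpos
      rcases Metric.mem_nhds_iff.mp hev with ⟨δ, hδ, hball⟩
      set t' : ℝ := min (t₀ + δ / 2) ((t₀ + t₁) / 2) with ht'
      have ht'gt : t₀ < t' := lt_min (by linarith) (by linarith)
      have ht'le : t' ≤ t₁ := le_trans (min_le_right _ _) (by linarith)
      have ht'ball : t' ∈ Metric.ball t₀ δ := by
        simp only [Metric.mem_ball, Real.dist_eq, abs_lt]
        constructor
        · linarith [min_le_right (t₀ + δ / 2) ((t₀ + t₁) / 2)]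
        · have := min_le_left (t₀ + δ / 2) ((t₀ + t₁) / 2); linarith
      have hSt' : S t' < κ * ρ := hball ht'ball
      have ht'0 : (0:ℝ) ≤ t' := le_trans ht₀0 ht'gt.le
      have hρy : ρ ≤ ψinv (c * t') := hyanti t' t₁ ht'0 ht'le
      have : t' ∈ A := by
        apply hmemA t' ⟨ht'0, ht'le⟩
        have : κ * ρ ≤ κ * ψinv (c * t') := mul_le_mul_of_nonneg_left hρy hκpos.le
        linarith
      linarith [hsup t' this]
  -- conclude
  intro t ht
  rcases hy t ht with ⟨hy1, hy2, hy3⟩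
  rcases (hSnn t ht).lt_or_eq with hSt | hSt
  · have h1 := main t ht hSt
    have h2 : S t / κ ≤ ψinv (c * t) := by
      apply hψinj _ _ hy1 (div_pos hSt hκpos)
      rw [hy3]
      exact h1
    rw [div_le_iff₀ hκpos] at h2
    linarith [mul_comm (ψinv (c * t)) κ]
  · rw [← hSt]
    positivity
end

section
/- Let p be a differentiable, positive, strictly increasing function on ℝ₊ satisfying p(Kx) ≥ m·p(K)·p(x) for some m > 0, all K ≥ 1, x ≥ 0. Let Γ ∈ C¹(ℝ₊) be positive, and suppose S satisfies S'(t) + p(S(t)) ≤ Γ(t), S(0) ≥ 0. Assume there exist c > 0 and κ ≥ 1 such that (d/dt)(p⁻¹(Γ(t))) + c·Γ(t) ≥ 0 for all t ≥ 0, m·p(κ) − c·κ − 1 ≥ 0, and κ·p⁻¹(Γ(0)) ≥ S(0). Then S(t) ≤ κ·p⁻¹(Γ(t)) for every t ≥ 0. -/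
open MeasureTheory Set

/-- Forced decay, case (2b): slowly decaying forcing dictates the decay
rate p⁻¹ ∘ Γ. -/
theorem stmt_3
    (p : ℝ → ℝ) (hpdiff : DifferentiableOn ℝ p (Ici 0))
    (hppos : ∀ x > (0:ℝ), 0 < p x) (hpmono : StrictMonoOn p (Ici 0))
    (m : ℝ) (hm : 0 < m)
    (hphom : ∀ K ≥ (1:ℝ), ∀ x ≥ (0:ℝ), m * p K * p x ≤ p (K * x))
    (Γ : ℝ → ℝ) (hΓC1 : ContDiffOn ℝ 1 Γ (Ici 0)) (hΓpos : ∀ t ≥ (0:ℝ), 0 < Γ t)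
    (S S' : ℝ → ℝ) (hS0 : 0 ≤ S 0) (hSnn : ∀ t ≥ (0:ℝ), 0 ≤ S t)
    (hSder : ∀ t ≥ (0:ℝ), HasDerivAt S (S' t) t)
    (hSineq : ∀ t ≥ (0:ℝ), S' t + p (S t) ≤ Γ t)
    (pinv : ℝ → ℝ) (hpinv : ∀ x ≥ (0:ℝ), pinv (p x) = x)
    (hpinvΓ : ∀ t ≥ (0:ℝ), 0 ≤ pinv (Γ t) ∧ p (pinv (Γ t)) = Γ t)
    (c κ : ℝ) (hc : 0 < c) (hκ : 1 ≤ κ)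
    (D : ℝ → ℝ)
    (hD : ∀ t ≥ (0:ℝ), HasDerivAt (fun s => pinv (Γ s)) (D t) t)
    (hDineq : ∀ t ≥ (0:ℝ), 0 ≤ D t + c * Γ t)
    (hκ1 : 0 ≤ m * p κ - c * κ - 1)
    (hκ2 : S 0 ≤ κ * pinv (Γ 0)) :
    ∀ t ≥ (0:ℝ), S t ≤ κ * pinv (Γ t) := by
  intro t ht
  refine le_of_forall_pos_le_add (fun ε hε => ?_)
  have key : ∀ x ∈ Icc (0:ℝ) t, S x ≤ κ * pinv (Γ x) + ε := by
    apply image_le_of_deriv_right_lt_deriv_boundary'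
      (f' := S') (B := fun s => κ * pinv (Γ s) + ε) (B' := fun s => κ * D s)
    · intro x hx
      exact ((hSder x hx.1).continuousAt).continuousWithinAt
    · intro x hx
      exact (hSder x hx.1).hasDerivWithinAt
    · have := hκ2; linarith
    · intro x hx
      exact (((hD x hx.1).const_mul κ).add_const ε).continuousAt.continuousWithinAt
    · intro x hx
      exact (((hD x hx.1).const_mul κ).add_const ε).hasDerivWithinAt
    · intro x hx heq
      have hx0 : (0:ℝ) ≤ x := hx.1
      have hΓx := hΓpos x hx0
      have hpi := hpinvΓ x hx0
      have hG0 : 0 ≤ κ * pinv (Γ x) := mul_nonneg (by linarith) hpi.1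
      -- p (κ * pinv (Γ x)) ≥ m * p κ * Γ x
      have h1 : m * p κ * Γ x ≤ p (κ * pinv (Γ x)) := by
        have := hphom κ hκ (pinv (Γ x)) hpi.1
        rwa [hpi.2] at this
      have h2 : (1 + c * κ) * Γ x ≤ m * p κ * Γ x := by
        have : 1 + c * κ ≤ m * p κ := by linarith
        exact mul_le_mul_of_nonneg_right this hΓx.le
      have h3 : -(κ * D x) ≤ c * κ * Γ x := by
        have := hDineq x hx0
        nlinarith
      -- strict monotonicity: S x = G x + ε > G x
      have hlt : p (κ * pinv (Γ x)) < p (S x) := by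
        apply hpmono hG0 (by rw [heq]; exact le_trans hG0 (by linarith))
        rw [heq]; linarith
      have hS := hSineq x hx0
      have : S' x ≤ Γ x - p (S x) := by linarith
      calc S' x ≤ Γ x - p (S x) := this
        _ < Γ x - p (κ * pinv (Γ x)) := by linarith
        _ ≤ Γ x - (1 + c * κ) * Γ x := by linarith
        _ = -(c * κ * Γ x) := by ring
        _ ≤ κ * D x := by linarith
  have := key t ⟨ht, le_refl t⟩
  linarith
end

section
/- Let T > 0, Γ ∈ L¹_loc(ℝ₊) nonnegative, δ(t) = ∫ₜ^{t+T} Γ(s) ds, and let W : ℝ₊ → ℝ₊ be continuous with W(t) ≤ α(t−s)[W(s) + ∫ₛᵗ Γ(σ) dσ] for all t ≥ s ≥ 0, where α is positive, monotone increasing. Suppose ℓ : ℝ₊ → ℝ is increasing, ℓ(0) = 0, I − ℓ is increasing, and W((m+1)T) + ℓ(W(mT) + δ(mT)) ≤ W(mT) + δ(mT) for all m ∈ ℕ. Let S solve S'(t) + (1/T)ℓ(S(t)) = Γ(t), S(0) = W(0). Then W(t) ≤ α(T)(S(t−T) + 2∫_{t−T}^{t} Γ(s) ds) for all t ≥ T.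 -/
open MeasureTheory Set

/-- Generalized Lasiecka–Tataru comparison lemma in the non-autonomous
setting. -/
theorem stmt_4
    (T : ℝ) (hT : 0 < T)
    (Γ : ℝ → ℝ) (hΓloc : LocallyIntegrableOn Γ (Ici 0))
    (hΓnn : ∀ t ≥ (0:ℝ), 0 ≤ Γ t)
    (W : ℝ → ℝ) (hWcont : ContinuousOn W (Ici 0)) (hWnn : ∀ t ≥ (0:ℝ), 0 ≤ W t)
    (α : ℝ → ℝ) (hαpos : ∀ s ≥ (0:ℝ), 0 < α s) (hαmono : MonotoneOn α (Ici 0))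
    (hW : ∀ s t : ℝ, 0 ≤ s → s ≤ t → W t ≤ α (t - s) * (W s + ∫ σ in s..t, Γ σ))
    (ℓ : ℝ → ℝ) (hℓmono : MonotoneOn ℓ (Ici 0)) (hℓ0 : ℓ 0 = 0)
    (hIℓ : MonotoneOn (fun s => s - ℓ s) (Ici 0))
    (hdisc : ∀ m : ℕ, W ((m + 1) * T) + ℓ (W (m * T) + ∫ s in (m * T)..(m * T + T), Γ s)
        ≤ W (m * T) + ∫ s in (m * T)..(m * T + T), Γ s)
    (S : ℝ → ℝ) (hS0 : S 0 = W 0) (hSnn : ∀ t ≥ (0:ℝ), 0 ≤ S t)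
    (hS : ∀ t ≥ (0:ℝ), HasDerivAt S (Γ t - (1 / T) * ℓ (S t)) t) :
    ∀ t ≥ T, W t ≤ α T * (S (t - T) + 2 * ∫ s in (t - T)..t, Γ s) := by
  -- basic facts about ℓ
  have hℓnn : ∀ s ≥ (0:ℝ), 0 ≤ ℓ s := by
    intro s hs
    have := hℓmono (Set.self_mem_Ici) (Set.mem_Ici.mpr hs) hs
    linarith [hℓ0 ▸ this]
  have hℓle : ∀ s ≥ (0:ℝ), ℓ s ≤ s := by
    intro s hs
    have := hIℓ (Set.self_mem_Ici) (Set.mem_Ici.mpr hs) hs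
    simp only [hℓ0, sub_zero] at this
    linarith
  -- a monotone extension of ℓ to all of ℝ, for measurability
  have hℓ'mono : Monotone (fun x => ℓ (max x 0)) := by
    intro x y hxy
    exact hℓmono (Set.mem_Ici.mpr (le_max_right x 0)) (Set.mem_Ici.mpr (le_max_right y 0))
      (max_le_max hxy le_rfl)
  have hℓ'meas : Measurable (fun x => ℓ (max x 0)) := hℓ'mono.measurable
  have hℓ'eq : ∀ s : ℝ, 0 ≤ s → ℓ (max s 0) = ℓ s := fun s hs => by rw [max_eq_left hs]
  -- continuity of S on [0, ∞)
  have hScont : ∀ t ≥ (0:ℝ), ContinuousAt S t := fun t ht => (hS t ht).continuousAt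
  -- Γ is interval integrable
  have hΓint : ∀ a b : ℝ, 0 ≤ a → a ≤ b → IntervalIntegrable Γ volume a b := by
    intro a b ha hab
    rw [intervalIntegrable_iff_integrableOn_Icc_of_le hab]
    exact hΓloc.integrableOn_compact_subset (fun x hx => le_trans ha hx.1) isCompact_Icc
  -- ℓ ∘ S is interval integrable
  have hℓSint : ∀ a b : ℝ, 0 ≤ a → a ≤ b →
      IntervalIntegrable (fun τ => ℓ (S τ)) volume a b := by
    intro a b ha hab
    rw [intervalIntegrable_iff_integrableOn_Icc_of_le hab]
    have hScontOn : ContinuousOn S (Icc a b) := fun x hx =>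
      (hScont x (le_trans ha hx.1)).continuousWithinAt
    obtain ⟨C, hC⟩ := isCompact_Icc.exists_bound_of_continuousOn hScontOn
    have hmeas : AEMeasurable S (volume.restrict (Icc a b)) :=
      hScontOn.aemeasurable measurableSet_Icc
    have hasm : AEStronglyMeasurable (fun τ => ℓ (max (S τ) 0)) (volume.restrict (Icc a b)) :=
      (hℓ'meas.comp_aemeasurable hmeas).aestronglyMeasurable
    have hint : IntegrableOn (fun τ => ℓ (max (S τ) 0)) (Icc a b) volume := by
      apply Integrable.mono' (integrable_const C) hasm
      filter_upwards [ae_restrict_mem measurableSet_Icc] with x hx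
      have hx0 : (0:ℝ) ≤ x := le_trans ha hx.1
      have hS0x : 0 ≤ S x := hSnn x hx0
      have h1 : 0 ≤ ℓ (S x) := hℓnn _ hS0x
      have h2 : ℓ (S x) ≤ S x := hℓle _ hS0x
      have h3 : S x ≤ C := le_trans (le_abs_self _) (hC x hx)
      rw [hℓ'eq _ hS0x, Real.norm_eq_abs, abs_of_nonneg h1]
      linarith
    exact hint.congr_fun (fun x hx => hℓ'eq _ (hSnn x (le_trans ha hx.1))) measurableSet_Icc
  -- fundamental theorem of calculus for S
  have hFTC : ∀ a b : ℝ, 0 ≤ a → a ≤ b →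
      S b - S a = (∫ τ in a..b, Γ τ) - (1/T) * ∫ τ in a..b, ℓ (S τ) := by
    intro a b ha hab
    have hderiv : ∀ x ∈ Set.uIcc a b, HasDerivAt S (Γ x - (1/T) * ℓ (S x)) x := by
      intro x hx
      rw [Set.uIcc_of_le hab] at hx
      exact hS x (le_trans ha hx.1)
    have hint : IntervalIntegrable (fun x => Γ x - (1/T) * ℓ (S x)) volume a b :=
      (hΓint a b ha hab).sub ((hℓSint a b ha hab).const_mul _)
    have heq := intervalIntegral.integral_eq_sub_of_hasDerivAt hderiv hint
    rw [← heq, intervalIntegral.integral_sub (hΓint a b ha hab)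
      ((hℓSint a b ha hab).const_mul _), intervalIntegral.integral_const_mul]
  -- growth bound for S
  have hA : ∀ a b : ℝ, 0 ≤ a → a ≤ b → S b ≤ S a + ∫ τ in a..b, Γ τ := by
    intro a b ha hab
    have h1 := hFTC a b ha hab
    have h2 : 0 ≤ ∫ τ in a..b, ℓ (S τ) :=
      intervalIntegral.integral_nonneg hab (fun u hu => hℓnn _ (hSnn u (le_trans ha hu.1)))
    have h3 : 0 ≤ (1/T) * ∫ τ in a..b, ℓ (S τ) :=
      mul_nonneg (by positivity) h2
    linarith
  -- key one-step lower bound for S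
  have hB : ∀ m : ℕ, S ((m:ℝ)*T) + (∫ s in ((m:ℝ)*T)..((m:ℝ)*T+T), Γ s)
      - ℓ (S ((m:ℝ)*T) + ∫ s in ((m:ℝ)*T)..((m:ℝ)*T+T), Γ s) ≤ S (((m:ℝ)+1)*T) := by
    intro m
    set a := (m:ℝ)*T with ha_def
    have ha : 0 ≤ a := mul_nonneg (Nat.cast_nonneg m) hT.le
    have hab : a ≤ a + T := by linarith
    set δ := ∫ s in a..(a+T), Γ s with hδ_def
    have hδnn : 0 ≤ δ :=
      intervalIntegral.integral_nonneg hab (fun u hu => hΓnn u (le_trans ha hu.1))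
    have hy : (0:ℝ) ≤ S a + δ := add_nonneg (hSnn a ha) hδnn
    have hpt : ∀ τ ∈ Icc a (a+T), ℓ (S τ) ≤ ℓ (S a + δ) := by
      intro τ hτ
      have hτ0 : 0 ≤ τ := le_trans ha hτ.1
      have h1 : S τ ≤ S a + ∫ s in a..τ, Γ s := hA a τ ha hτ.1
      have hsplit : (∫ s in a..τ, Γ s) + (∫ s in τ..(a+T), Γ s) = δ :=
        intervalIntegral.integral_add_adjacent_intervals (hΓint a τ ha hτ.1)
          (hΓint τ (a+T) hτ0 hτ.2)
      have h2 : 0 ≤ ∫ s in τ..(a+T), Γ s :=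
        intervalIntegral.integral_nonneg hτ.2 (fun u hu => hΓnn u (le_trans hτ0 hu.1))
      exact hℓmono (Set.mem_Ici.mpr (hSnn τ hτ0)) (Set.mem_Ici.mpr hy) (by linarith)
    have hintle : (∫ τ in a..(a+T), ℓ (S τ)) ≤ T * ℓ (S a + δ) := by
      have h := intervalIntegral.integral_mono_on hab (hℓSint a (a+T) ha hab)
        intervalIntegrable_const hpt
      rw [intervalIntegral.integral_const] at h
      simpa using h
    have hf := hFTC a (a+T) ha hab
    have h4 : (1/T) * (∫ τ in a..(a+T), ℓ (S τ)) ≤ ℓ (S a + δ) := by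
      have := mul_le_mul_of_nonneg_left hintle (le_of_lt (one_div_pos.mpr hT))
      calc (1/T) * (∫ τ in a..(a+T), ℓ (S τ)) ≤ (1/T) * (T * ℓ (S a + δ)) := this
        _ = ℓ (S a + δ) := by field_simp
    have hbeq : ((m:ℝ)+1)*T = a + T := by ring
    rw [hbeq]
    linarith
  -- induction: W(mT) ≤ S(mT)
  have hCmp : ∀ m : ℕ, W ((m:ℝ)*T) ≤ S ((m:ℝ)*T) := by
    intro m
    induction m with
    | zero => simp [hS0]
    | succ n ih =>
      set a := (n:ℝ)*T with ha_def
      have ha : 0 ≤ a := mul_nonneg (Nat.cast_nonneg n) hT.le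
      have hab : a ≤ a + T := by linarith
      set δ := ∫ s in a..(a+T), Γ s with hδ_def
      have hδnn : 0 ≤ δ :=
        intervalIntegral.integral_nonneg hab (fun u hu => hΓnn u (le_trans ha hu.1))
      have hx : (0:ℝ) ≤ W a + δ := add_nonneg (hWnn a ha) hδnn
      have hy : (0:ℝ) ≤ S a + δ := add_nonneg (hSnn a ha) hδnn
      have hxy : W a + δ ≤ S a + δ := by linarith
      have h1 := hdisc n
      have h2 := hIℓ (Set.mem_Ici.mpr hx) (Set.mem_Ici.mpr hy) hxy
      simp only at h2
      have h3 := hB n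
      push_cast
      rw [show ((n:ℝ)+1)*T = a + T by ring] at h3 ⊢
      rw [show ((n:ℝ)+1)*T = a + T by ring] at h1
      linarith
  -- main argument
  intro t ht
  have htT : 0 ≤ t - T := by linarith
  set m := ⌈(t - T)/T⌉₊ with hm_def
  have h1 : t - T ≤ (m:ℝ) * T := by
    have := Nat.le_ceil ((t-T)/T)
    rw [div_le_iff₀ hT] at this
    exact this
  have h2 : (m:ℝ) * T ≤ t := by
    have h := (Nat.ceil_lt_add_one (by positivity : (0:ℝ) ≤ (t-T)/T)).le
    have h' : (m:ℝ) * T ≤ ((t-T)/T + 1) * T :=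
      mul_le_mul_of_nonneg_right h hT.le
    have heq : ((t-T)/T + 1) * T = t := by field_simp; ring
    linarith
  have hm0 : 0 ≤ (m:ℝ)*T := mul_nonneg (Nat.cast_nonneg m) hT.le
  have hWt := hW ((m:ℝ)*T) t hm0 h2
  have hα : α (t - (m:ℝ)*T) ≤ α T :=
    hαmono (Set.mem_Ici.mpr (by linarith)) (Set.mem_Ici.mpr hT.le) (by linarith)
  have hInn : 0 ≤ ∫ s in ((m:ℝ)*T)..t, Γ s :=
    intervalIntegral.integral_nonneg h2 (fun u hu => hΓnn u (le_trans hm0 hu.1))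
  have hWS := hCmp m
  have hAS := hA (t-T) ((m:ℝ)*T) htT h1
  have hsplit : (∫ s in (t-T)..((m:ℝ)*T), Γ s) + (∫ s in ((m:ℝ)*T)..t, Γ s)
      = ∫ s in (t-T)..t, Γ s :=
    intervalIntegral.integral_add_adjacent_intervals (hΓint _ _ htT h1) (hΓint _ _ hm0 h2)
  have hInn2 : 0 ≤ ∫ s in (t-T)..t, Γ s :=
    intervalIntegral.integral_nonneg (by linarith) (fun u hu => hΓnn u (le_trans htT hu.1))
  have key : W ((m:ℝ)*T) + (∫ s in ((m:ℝ)*T)..t, Γ s)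
      ≤ S (t-T) + 2 * ∫ s in (t-T)..t, Γ s := by linarith
  calc W t ≤ α (t - (m:ℝ)*T) * (W ((m:ℝ)*T) + ∫ s in ((m:ℝ)*T)..t, Γ s) := hWt
    _ ≤ α T * (W ((m:ℝ)*T) + ∫ s in ((m:ℝ)*T)..t, Γ s) :=
        mul_le_mul_of_nonneg_right hα (add_nonneg (hWnn _ hm0) hInn)
    _ ≤ α T * (S (t-T) + 2 * ∫ s in (t-T)..t, Γ s) :=
        mul_le_mul_of_nonneg_left key (hαpos T hT.le).le
end

section
/- Under the hypotheses of the generalized Lasiecka–Tataru lemma, if W(mT) ≤ S(mT), where S solves S' + (1/T)ℓ(S) = Γ with S(0) = W(0), then W((m+1)T) ≤ S((m+1)T). In particular, by induction W(mT) ≤ S(mT) for all m ∈ ℕ. -/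
open MeasureTheory Set

/-- Induction step of the generalized Lasiecka–Tataru comparison lemma:
W(mT) ≤ S(mT) implies W((m+1)T) ≤ S((m+1)T); hence W(mT) ≤ S(mT) for all m. -/
theorem stmt_5
    (T : ℝ) (hT : 0 < T)
    (Γ : ℝ → ℝ) (hΓloc : LocallyIntegrableOn Γ (Ici 0))
    (hΓnn : ∀ t ≥ (0:ℝ), 0 ≤ Γ t)
    (W : ℝ → ℝ) (hWcont : ContinuousOn W (Ici 0)) (hWnn : ∀ t ≥ (0:ℝ), 0 ≤ W t)
    (ℓ : ℝ → ℝ) (hℓmono : MonotoneOn ℓ (Ici 0)) (hℓ0 : ℓ 0 = 0)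
    (hIℓ : MonotoneOn (fun s => s - ℓ s) (Ici 0))
    (hdisc : ∀ m : ℕ, W ((m + 1) * T) + ℓ (W (m * T) + ∫ s in (m * T)..(m * T + T), Γ s)
        ≤ W (m * T) + ∫ s in (m * T)..(m * T + T), Γ s)
    (S : ℝ → ℝ) (hS0 : S 0 = W 0) (hSnn : ∀ t ≥ (0:ℝ), 0 ≤ S t)
    (hS : ∀ t ≥ (0:ℝ), HasDerivAt S (Γ t - (1 / T) * ℓ (S t)) t) :
    (∀ m : ℕ, W (m * T) ≤ S (m * T) → W ((m + 1) * T) ≤ S ((m + 1) * T)) ∧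
      (∀ m : ℕ, W (m * T) ≤ S (m * T)) := by
  -- extend ℓ to a globally monotone function
  have hℓnn : ∀ x ≥ (0:ℝ), 0 ≤ ℓ x := by
    intro x hx
    have := hℓmono (self_mem_Ici) hx hx
    rwa [hℓ0] at this
  -- continuity of S on Ici 0
  have hScont : ContinuousOn S (Ici 0) := fun t ht =>
    ((hS t ht).differentiableAt.continuousAt).continuousWithinAt
  have key : ∀ m : ℕ, W ((m:ℝ) * T) ≤ S ((m:ℝ) * T) →
      W (((m:ℝ) + 1) * T) ≤ S (((m:ℝ) + 1) * T) := by
    intro m hm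
    set a : ℝ := (m:ℝ) * T with ha_def
    have ha : (0:ℝ) ≤ a := mul_nonneg (Nat.cast_nonneg m) hT.le
    set b : ℝ := a + T with hb_def
    have hab : a ≤ b := by simp [hb_def]; linarith
    have hbpos : (0:ℝ) ≤ b := le_trans ha hab
    have hsub : Icc a b ⊆ Ici (0:ℝ) := fun t ht => le_trans ha ht.1
    -- Γ is interval integrable on [a, b]
    have hΓint : ∀ t ∈ Icc a b, IntervalIntegrable Γ volume a t := by
      intro t ht
      have : IntegrableOn Γ (Icc a t) volume :=
        hΓloc.integrableOn_compact_subset (fun u hu => le_trans ha hu.1) isCompact_Icc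
      exact (this.mono_set (by rw [uIcc_of_le ht.1])).intervalIntegrable
    have hΓintb : IntervalIntegrable Γ volume a b := hΓint b ⟨hab, le_rfl⟩
    -- ℓ ∘ S is integrable on Icc a b
    have hℓS_int : IntegrableOn (fun t => ℓ (S t)) (Icc a b) volume := by
      -- measurability
      set ℓ' : ℝ → ℝ := fun x => ℓ (max x 0) with hℓ'def
      have hℓ'mono : Monotone ℓ' := fun x y hxy =>
        hℓmono (le_max_right x 0) (le_max_right y 0) (max_le_max hxy le_rfl)
      have hSmeas : AEMeasurable S (volume.restrict (Icc a b)) :=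
        ((hScont.mono hsub).aemeasurable measurableSet_Icc)
      have hmeas : AEStronglyMeasurable (fun t => ℓ' (S t)) (volume.restrict (Icc a b)) :=
        (hℓ'mono.measurable.comp_aemeasurable hSmeas).aestronglyMeasurable
      -- bound
      obtain ⟨C, hC⟩ := isCompact_Icc.exists_bound_of_continuousOn (hScont.mono hsub)
      have hC0 : (0:ℝ) ≤ C := le_trans (norm_nonneg _) (hC a ⟨le_rfl, hab⟩)
      have hbound : ∀ t ∈ Icc a b, ‖ℓ' (S t)‖ ≤ ℓ' C := by
        intro t ht
        have hSt : 0 ≤ S t := hSnn t (hsub ht)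
        have h1 : 0 ≤ ℓ' (S t) := by
          have : ℓ' 0 = 0 := by simp [hℓ'def, hℓ0]
          rw [← this]; exact hℓ'mono hSt
        have h2 : ℓ' (S t) ≤ ℓ' C := by
          apply hℓ'mono
          calc S t ≤ ‖S t‖ := le_abs_self _
            _ ≤ C := hC t ht
        rw [Real.norm_eq_abs, abs_of_nonneg h1]; exact h2
      have hconst : IntegrableOn (fun _ : ℝ => ℓ' C) (Icc a b) volume :=
        integrableOn_const measure_Icc_lt_top.ne
      have : IntegrableOn (fun t => ℓ' (S t)) (Icc a b) volume := by
        refine hconst.mono' hmeas ?_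
        filter_upwards [ae_restrict_mem measurableSet_Icc] with t ht
        simpa using hbound t ht
      refine this.congr_fun (fun t ht => ?_) measurableSet_Icc
      have : S t ≥ 0 := hSnn t (hsub ht)
      simp [hℓ'def, max_eq_left this]
    have hℓS_ii : ∀ t ∈ Icc a b, IntervalIntegrable (fun t => ℓ (S t)) volume a t := by
      intro t ht
      exact ((hℓS_int.mono_set (Icc_subset_Icc le_rfl ht.2)).mono_set
        (by rw [uIcc_of_le ht.1])).intervalIntegrable
    -- FTC on any [a, t] ⊆ [a, b]
    have hFTC : ∀ t ∈ Icc a b,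
        S t - S a = (∫ s in a..t, Γ s) - (1 / T) * ∫ s in a..t, ℓ (S s) := by
      intro t ht
      have h1 : (∫ s in a..t, (Γ s - (1 / T) * ℓ (S s))) = S t - S a := by
        apply intervalIntegral.integral_eq_sub_of_hasDerivAt
        · intro u hu
          rw [uIcc_of_le ht.1] at hu
          exact hS u (le_trans ha hu.1)
        · exact (hΓint t ht).sub (((hℓS_ii t ht).const_mul (1 / T)))
      rw [← h1, intervalIntegral.integral_sub (hΓint t ht)
        ((hℓS_ii t ht).const_mul (1 / T)), intervalIntegral.integral_const_mul]
    set δ : ℝ := ∫ s in a..b, Γ s with hδdef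
    have hδnn : 0 ≤ δ := intervalIntegral.integral_nonneg hab
      (fun u hu => hΓnn u (hsub hu))
    -- pointwise bound on S
    have hSbound : ∀ t ∈ Icc a b, S t ≤ S a + δ := by
      intro t ht
      have h1 : (0:ℝ) ≤ ∫ s in a..t, ℓ (S s) :=
        intervalIntegral.integral_nonneg ht.1 (fun u hu => hℓnn _ (hSnn u (le_trans ha hu.1)))
      have htb : IntervalIntegrable Γ volume t b := by
        apply hΓintb.mono_set
        rw [uIcc_of_le ht.2, uIcc_of_le hab]
        exact Icc_subset_Icc ht.1 le_rfl
      have h2 : (∫ s in a..t, Γ s) ≤ δ := by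
        rw [hδdef, ← intervalIntegral.integral_add_adjacent_intervals (hΓint t ht) htb]
        have : (0:ℝ) ≤ ∫ s in t..b, Γ s :=
          intervalIntegral.integral_nonneg ht.2 (fun u hu => hΓnn u (le_trans (hsub ht) hu.1))
        linarith
      have := hFTC t ht
      have h3 : 0 ≤ (1 / T) * ∫ s in a..t, ℓ (S s) :=
        mul_nonneg (by positivity) h1
      linarith
    -- bound the integral of ℓ ∘ S
    have hSaδ : (0:ℝ) ≤ S a + δ := add_nonneg (hSnn a ha) hδnn
    have hint2 : (∫ s in a..b, ℓ (S s)) ≤ T * ℓ (S a + δ) := by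
      have : (∫ s in a..b, ℓ (S s)) ≤ ∫ _ in a..b, ℓ (S a + δ) := by
        apply intervalIntegral.integral_mono_on hab (hℓS_ii b ⟨hab, le_rfl⟩)
          (intervalIntegrable_const)
        intro t ht
        exact hℓmono (hSnn t (hsub ht)) hSaδ (hSbound t ht)
      simpa [hb_def] using this
    have hSb : S a + δ - ℓ (S a + δ) ≤ S b := by
      have := hFTC b ⟨hab, le_rfl⟩
      have h4 : (1 / T) * (∫ s in a..b, ℓ (S s)) ≤ ℓ (S a + δ) := by
        calc (1 / T) * (∫ s in a..b, ℓ (S s)) ≤ (1 / T) * (T * ℓ (S a + δ)) := by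
              apply mul_le_mul_of_nonneg_left hint2 (by positivity)
          _ = ℓ (S a + δ) := by field_simp
      linarith
    -- discrete inequality for W
    have hWδ : (0:ℝ) ≤ W a + δ := add_nonneg (hWnn a ha) hδnn
    have hdiscm := hdisc m
    have hb_eq : ((m:ℝ) + 1) * T = b := by rw [hb_def, ha_def]; ring
    rw [hb_eq, show (m:ℝ) * T = a from rfl, show (m:ℝ) * T + T = b from rfl] at hdiscm
    have hWb : W b ≤ (W a + δ) - ℓ (W a + δ) := by
      rw [hδdef]; linarith
    have hmono := hIℓ hWδ hSaδ (by linarith)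
    simp only at hmono
    rw [hb_eq]
    linarith
  refine ⟨key, ?_⟩
  intro m
  induction m with
  | zero => simp [hS0]
  | succ n ih =>
    have := key n ih
    push_cast
    push_cast at this
    exact this
end

section
/- Suppose S is absolutely continuous with S(0) > 0 and satisfies S'(t) + C·S(t)^{(1+r₀)/(2r₀)} ≤ Γ(t) for constants C > 0, r₀ ∈ (0,1), where Γ(t) ≤ M(1+t)^{−θ} with 1 < θ ≤ (1+r₀)/(1−r₀). Then there exists c > 0 such that S(t) ≤ c·(1+t)^{−2r₀θ/(1+r₀)} for all t ≥ 0. -/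
open Real Set

/-- Sublinear damping application, case 1 < θ ≤ (1+r₀)/(1-r₀):
polynomial decay at rate (1+t)^{-2r₀θ/(1+r₀)}. -/
theorem stmt_15
    (C r₀ M θ : ℝ) (hC : 0 < C) (hr₀ : 0 < r₀) (hr₀1 : r₀ < 1) (hM : 0 < M)
    (hθ1 : 1 < θ) (hθ2 : θ ≤ (1 + r₀) / (1 - r₀))
    (S S' Γ : ℝ → ℝ) (hS0 : 0 < S 0) (hSnn : ∀ t ≥ (0:ℝ), 0 ≤ S t)
    (hSder : ∀ t ≥ (0:ℝ), HasDerivAt S (S' t) t)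
    (hΓ : ∀ t ≥ (0:ℝ), Γ t ≤ M * (1 + t) ^ (-θ))
    (hineq : ∀ t ≥ (0:ℝ), S' t + C * S t ^ ((1 + r₀) / (2 * r₀)) ≤ Γ t) :
    ∃ c > (0:ℝ), ∀ t ≥ (0:ℝ), S t ≤ c * (1 + t) ^ (-(2 * r₀ * θ / (1 + r₀))) := by
  set α : ℝ := 2 * r₀ * θ / (1 + r₀) with hα
  set p : ℝ := (1 + r₀) / (2 * r₀) with hp
  have h1r₀ : (0:ℝ) < 1 + r₀ := by linarith
  have h2r₀ : (0:ℝ) < 2 * r₀ := by linarith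
  have hαpos : 0 < α := by positivity
  have hp1 : 1 < p := by
    rw [hp, lt_div_iff₀ h2r₀]; linarith
  have hαp : α * p = θ := by
    rw [hα, hp, div_mul_div_comm, div_eq_iff (by positivity)]; ring
  have hα2 : α * (1 + r₀) = 2 * r₀ * θ := by
    rw [hα]; field_simp
  have hθα : θ ≤ α + 1 := by
    have h6 : θ * (1 - r₀) ≤ 1 + r₀ :=
      (le_div_iff₀ (by linarith : (0:ℝ) < 1 - r₀)).mp hθ2
    nlinarith [hα2, h1r₀]
  -- choose the constant c
  set B : ℝ := ((α + M + 1) / C) ^ (1 / (p - 1)) with hB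
  set c : ℝ := max 1 (max (S 0) B) with hc
  have hc1 : (1:ℝ) ≤ c := le_max_left _ _
  have hcpos : (0:ℝ) < c := lt_of_lt_of_le one_pos hc1
  have hcS0 : S 0 ≤ c := le_trans (le_max_left _ _) (le_max_right _ _)
  have hcB : B ≤ c := le_trans (le_max_right _ _) (le_max_right _ _)
  have hkey : α * c + M + 1 ≤ C * c ^ p := by
    have hBnn : (0:ℝ) ≤ (α + M + 1) / C := by positivity
    have h1 : (α + M + 1) / C ≤ c ^ (p - 1) := by
      have := Real.rpow_le_rpow (Real.rpow_nonneg hBnn _) hcB (by linarith : (0:ℝ) ≤ p - 1)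
      rwa [← Real.rpow_mul hBnn, one_div,
        inv_mul_cancel₀ (by intro h; rw [sub_eq_zero] at h; linarith [hp1, h.symm] : p - 1 ≠ 0),
        Real.rpow_one] at this
    have h2 : (α + M + 1) ≤ C * c ^ (p - 1) := by
      rw [div_le_iff₀ hC] at h1; linarith [h1]
    have h3 : C * c ^ p = C * c ^ (p - 1) * c := by
      rw [mul_assoc, ← Real.rpow_add_one (ne_of_gt hcpos)]
      ring_nf
    have h4 : (α + M + 1) * c ≤ C * c ^ (p - 1) * c := by
      exact mul_le_mul_of_nonneg_right h2 (le_of_lt hcpos)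
    have h5 : α * c + M + 1 ≤ (α + M + 1) * c := by nlinarith
    rw [h3]; linarith
  refine ⟨c, hcpos, ?_⟩
  intro T hT
  -- barrier function
  set φ : ℝ → ℝ := fun t => c * (1 + t) ^ (-α) with hφ
  set φ' : ℝ → ℝ := fun t => c * (-α * (1 + t) ^ (-α - 1)) with hφ'
  have hφder : ∀ x ∈ Ico (0:ℝ) T, HasDerivWithinAt φ (φ' x) (Ici x) x := by
    intro x hx
    have hx0 : (0:ℝ) ≤ x := hx.1
    have h1x : (0:ℝ) < 1 + x := by linarith
    have hb : HasDerivAt (fun t : ℝ => (1 + t) ^ (-α)) (-α * (1 + x) ^ (-α - 1)) x := by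
      have h := Real.hasDerivAt_rpow_const (p := -α) (x := 1 + x) (Or.inl (ne_of_gt h1x))
      have hid : HasDerivAt (fun t : ℝ => 1 + t) 1 x := by
        simpa using (hasDerivAt_id x).const_add 1
      have := h.comp x hid
      rw [mul_one] at this; exact this
    exact ((hb.const_mul c).hasDerivWithinAt)
  have hφcont : ContinuousOn φ (Icc 0 T) := by
    intro x hx
    have h1x : (0:ℝ) < 1 + x := by linarith [hx.1]
    have hcont : ContinuousAt (fun t : ℝ => (1 + t) ^ (-α)) x :=
      (Real.continuousAt_rpow_const _ _ (Or.inl (ne_of_gt h1x))).comp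
        ((continuous_const.add continuous_id).continuousAt)
    exact (continuousAt_const.mul hcont).continuousWithinAt
  have hScont : ContinuousOn S (Icc 0 T) := fun x hx =>
    ((hSder x hx.1).continuousAt).continuousWithinAt
  have hSder' : ∀ x ∈ Ico (0:ℝ) T, HasDerivWithinAt S (S' x) (Ici x) x := fun x hx =>
    (hSder x hx.1).hasDerivWithinAt
  have ha : S 0 ≤ φ 0 := by
    simp only [hφ, add_zero, Real.one_rpow, mul_one]
    exact hcS0
  have bound : ∀ x ∈ Ico (0:ℝ) T, S x = φ x → S' x < φ' x := by
    intro x hx hSx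
    have hx0 : (0:ℝ) ≤ x := hx.1
    have h1x : (0:ℝ) < 1 + x := by linarith
    have h1x1 : (1:ℝ) ≤ 1 + x := by linarith
    -- S x ^ p = c ^ p * (1+x)^(-θ)
    have hSp : S x ^ p = c ^ p * (1 + x) ^ (-θ) := by
      rw [hSx]
      have h1 : ((1 + x) ^ (-α)) ^ p = (1 + x) ^ (-θ) := by
        rw [← Real.rpow_mul (le_of_lt h1x)]
        congr 1
        rw [← hαp]; ring
      rw [Real.mul_rpow (le_of_lt hcpos) (Real.rpow_nonneg (le_of_lt h1x) _), h1]
    have h2 : S' x ≤ M * (1 + x) ^ (-θ) - C * (c ^ p * (1 + x) ^ (-θ)) := by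
      have := hineq x hx0
      have hΓx := hΓ x hx0
      rw [hSp] at this
      linarith
    -- key estimate
    have hexp : (1 + x) ^ (-(α + 1)) ≤ (1 + x) ^ (-θ) :=
      Real.rpow_le_rpow_of_exponent_le h1x1 (by linarith)
    have hpow_pos : (0:ℝ) < (1 + x) ^ (-θ) := Real.rpow_pos_of_pos h1x _
    have h3 : M * (1 + x) ^ (-θ) - C * (c ^ p * (1 + x) ^ (-θ))
        ≤ -(α * c + 1) * (1 + x) ^ (-θ) := by
      have h := mul_le_mul_of_nonneg_right hkey (le_of_lt hpow_pos)
      have h' : (α * c + M + 1) * (1 + x) ^ (-θ) ≤ C * (c ^ p * (1 + x) ^ (-θ)) := by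
        rw [← mul_assoc]; exact h
      nlinarith [h']
    have h4 : -(α * c) * (1 + x) ^ (-θ) ≤ -(α * c) * (1 + x) ^ (-(α + 1)) := by
      have hαc : (0:ℝ) ≤ α * c := by positivity
      nlinarith [mul_le_mul_of_nonneg_left hexp hαc]
    have h5 : -(α * c + 1) * (1 + x) ^ (-θ) < -(α * c) * (1 + x) ^ (-(α + 1)) := by
      have : -(α * c + 1) * (1 + x) ^ (-θ)
          = -(α * c) * (1 + x) ^ (-θ) - (1 + x) ^ (-θ) := by ring
      rw [this]
      linarith
    have hφ'x : φ' x = -(α * c) * (1 + x) ^ (-(α + 1)) := by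
      show c * (-α * (1 + x) ^ (-α - 1)) = _
      rw [show -α - 1 = -(α + 1) by ring]
      ring
    rw [hφ'x]
    calc S' x ≤ M * (1 + x) ^ (-θ) - C * (c ^ p * (1 + x) ^ (-θ)) := h2
      _ ≤ -(α * c + 1) * (1 + x) ^ (-θ) := h3
      _ < -(α * c) * (1 + x) ^ (-(α + 1)) := h5
  have := image_le_of_deriv_right_lt_deriv_boundary' hScont hSder' ha hφcont hφder bound
    (right_mem_Icc.mpr hT)
  simpa [hφ] using this
end

section
/- Suppose S is absolutely continuous with S(0) > 0 and satisfies S'(t) + C·S(t)^{(1+r₀)/(2r₀)} ≤ Γ(t) for constants C > 0, r₀ ∈ (0,1), where Γ(t) ≤ M(1+t)^{−θ} with θ ≥ (1+r₀)/(1−r₀) (or Γ(t) ≤ M e^{−θt}, θ > 0). Then there exists c > 0 (depending on S(0)) such that S(t) ≤ c·t^{−2r₀/(1−r₀)} for all t > 0. -/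
open Real Set Filter

/-- A continuous function tending to 0 at infinity is bounded above on `[0, ∞)`. -/
lemma stmt_16_bdd_helper {h : ℝ → ℝ} (hc : Continuous h)
    (ht : Filter.Tendsto h Filter.atTop (nhds 0)) : ∃ K ≥ (1:ℝ), ∀ x ≥ (0:ℝ), h x ≤ K := by
  obtain ⟨T, hT⟩ := Filter.eventually_atTop.1 (ht.eventually_le_const one_pos)
  obtain ⟨x₀, -, hx₀⟩ := isCompact_Icc.exists_isMaxOn (s := Icc 0 (max T 0))
    ⟨0, by simp⟩ hc.continuousOn
  refine ⟨max (h x₀) 1, le_max_right _ _, fun x hx => ?_⟩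
  rcases le_total x (max T 0) with h1 | h1
  · exact le_trans (hx₀ ⟨hx, h1⟩) (le_max_left _ _)
  · exact le_trans (hT x (le_trans (le_max_left _ _) h1)) (le_max_right _ _)

/-- Sublinear damping application, fast forcing: decay at the unforced rate
t^{-2r₀/(1-r₀)}. -/
theorem stmt_16
    (C r₀ M θ : ℝ) (hC : 0 < C) (hr₀ : 0 < r₀) (hr₀1 : r₀ < 1) (hM : 0 < M)
    (S S' Γ : ℝ → ℝ) (hS0 : 0 < S 0) (hSnn : ∀ t ≥ (0:ℝ), 0 ≤ S t)
    (hSder : ∀ t ≥ (0:ℝ), HasDerivAt S (S' t) t)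
    (hΓcase :
      ((1 + r₀) / (1 - r₀) ≤ θ ∧ ∀ t ≥ (0:ℝ), Γ t ≤ M * (1 + t) ^ (-θ)) ∨
      (0 < θ ∧ ∀ t ≥ (0:ℝ), Γ t ≤ M * Real.exp (-θ * t)))
    (hineq : ∀ t ≥ (0:ℝ), S' t + C * S t ^ ((1 + r₀) / (2 * r₀)) ≤ Γ t) :
    ∃ c > (0:ℝ), ∀ t > (0:ℝ), S t ≤ c * t ^ (-(2 * r₀ / (1 - r₀))) := by
  set α : ℝ := 2 * r₀ / (1 - r₀) with hα_def
  set p : ℝ := (1 + r₀) / (2 * r₀) with hp_def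
  have h1r : (0:ℝ) < 1 - r₀ := by linarith
  have hα : 0 < α := by positivity
  have hp1 : 1 < p := by
    rw [hp_def, lt_div_iff₀ (by positivity)]; linarith
  have hαp : α * p = α + 1 := by
    rw [hα_def, hp_def]; field_simp; ring
  -- Step 1: unify forcing bound
  obtain ⟨M', hM'1, hΓ'⟩ : ∃ M' ≥ (1:ℝ), ∀ t ≥ (0:ℝ), Γ t ≤ M' * (1 + t) ^ (-(α + 1)) := by
    rcases hΓcase with ⟨hθ, hΓ⟩ | ⟨hθ, hΓ⟩
    · have hθ' : α + 1 ≤ θ := by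
        have : (1 + r₀) / (1 - r₀) = α + 1 := by rw [hα_def]; field_simp; ring
        linarith [this ▸ hθ]
      refine ⟨max M 1, le_max_right _ _, fun t ht => ?_⟩
      have h1t : (1:ℝ) ≤ 1 + t := by linarith
      calc Γ t ≤ M * (1 + t) ^ (-θ) := hΓ t ht
        _ ≤ max M 1 * (1 + t) ^ (-(α + 1)) := by
            apply mul_le_mul (le_max_left _ _)
              (Real.rpow_le_rpow_of_exponent_le h1t (by linarith))
              (Real.rpow_nonneg (by linarith) _) (by positivity)
    · -- exponential case: bound (1+t)^(α+1) exp(-θ(1+t)) by K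
      obtain ⟨K, hK1, hK⟩ := stmt_16_bdd_helper
        (h := fun x => x ^ (α + 1) * Real.exp (-θ * x))
        ((continuous_iff_continuousAt.2 fun x =>
          Real.continuousAt_rpow_const x _ (Or.inr (by positivity))).mul
          (Real.continuous_exp.comp (continuous_const.mul continuous_id)))
        (by simpa using tendsto_rpow_mul_exp_neg_mul_atTop_nhds_zero (α + 1) θ hθ)
      refine ⟨max (M * Real.exp θ * K) 1, le_max_right _ _, fun t ht => ?_⟩
      have h1t : (0:ℝ) < 1 + t := by linarith
      have hKt := hK (1 + t) (by linarith)
      have hpow : (0:ℝ) < (1 + t) ^ (α + 1) := Real.rpow_pos_of_pos h1t _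
      have hexp : Real.exp (-θ * (1 + t)) ≤ K * (1 + t) ^ (-(α + 1)) := by
        have h2 : Real.exp (-θ * (1 + t)) ≤ K / (1 + t) ^ (α + 1) := by
          rw [le_div_iff₀ hpow]; nlinarith [hKt]
        rw [Real.rpow_neg h1t.le, ← div_eq_mul_inv]; exact h2
      have hnn : (0:ℝ) ≤ (1 + t) ^ (-(α + 1)) := Real.rpow_nonneg h1t.le _
      calc Γ t ≤ M * Real.exp (-θ * t) := hΓ t ht
        _ = M * Real.exp θ * Real.exp (-θ * (1 + t)) := by
            rw [mul_assoc, ← Real.exp_add]; ring_nf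
        _ ≤ M * Real.exp θ * (K * (1 + t) ^ (-(α + 1))) := by
            apply mul_le_mul_of_nonneg_left hexp (by positivity)
        _ = M * Real.exp θ * K * (1 + t) ^ (-(α + 1)) := by ring
        _ ≤ max (M * Real.exp θ * K) 1 * (1 + t) ^ (-(α + 1)) :=
            mul_le_mul_of_nonneg_right (le_max_left _ _) hnn
  have hM'0 : (0:ℝ) < M' := lt_of_lt_of_le one_pos hM'1
  -- Step 2: choose A
  set X : ℝ := (α + M' + 1) / C with hX_def
  have hX0 : 0 < X := by positivity
  set A : ℝ := max (max 1 (S 0)) (X ^ (1 / (p - 1))) with hA_def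
  have hA1 : (1:ℝ) ≤ A := le_trans (le_max_left _ _) (le_max_left _ _)
  have hA0 : (0:ℝ) < A := lt_of_lt_of_le one_pos hA1
  have hAS0 : S 0 ≤ A := le_trans (le_max_right _ _) (le_max_left _ _)
  have hAX : X ^ (1 / (p - 1)) ≤ A := le_max_right _ _
  have hp1' : (0:ℝ) < p - 1 := by linarith
  have hApm1 : X ≤ A ^ (p - 1) := by
    have := Real.rpow_le_rpow (Real.rpow_nonneg hX0.le _) hAX hp1'.le
    rwa [← Real.rpow_mul hX0.le, one_div, inv_mul_cancel₀ (ne_of_gt hp1'),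
      Real.rpow_one] at this
  have hCAp : α * A + M' + 1 ≤ C * A ^ p := by
    have hAp : A ^ p = A ^ (p - 1) * A := by
      rw [show p = (p - 1) + 1 by ring, Real.rpow_add_one (ne_of_gt hA0)]
      ring_nf
    rw [hAp]
    have h1 : (α + M' + 1) * A ≤ C * (A ^ (p - 1) * A) := by
      rw [← mul_assoc]
      apply mul_le_mul_of_nonneg_right _ hA0.le
      calc α + M' + 1 = C * X := by rw [hX_def]; field_simp
        _ ≤ C * A ^ (p - 1) := mul_le_mul_of_nonneg_left hApm1 hC.le
    nlinarith [hA1, hM'0, hα]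
  -- Step 3: comparison on [0, b]
  have key : ∀ t ≥ (0:ℝ), S t ≤ A * (1 + t) ^ (-α) := by
    intro b hb
    set φ : ℝ → ℝ := fun t => A * (1 + t) ^ (-α) with hφ_def
    set φ' : ℝ → ℝ := fun t => A * (-α * (1 + t) ^ (-α - 1)) with hφ'_def
    have hφderiv : ∀ x ∈ Ico (0:ℝ) b, HasDerivAt φ (φ' x) x := by
      intro x hx
      have h1x : (0:ℝ) < 1 + x := by have := hx.1; linarith
      have h1 : HasDerivAt (fun y : ℝ => 1 + y) 1 x := by
        simpa using (hasDerivAt_id x).const_add 1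
      have h2 := (Real.hasDerivAt_rpow_const (x := 1 + x) (p := -α)
        (Or.inl (ne_of_gt h1x))).comp x h1
      simpa [hφ'_def, mul_comm, mul_assoc, mul_left_comm] using h2.const_mul A
    have hcomp := image_le_of_deriv_right_lt_deriv_boundary'
      (f := S) (f' := S') (a := 0) (b := b) (B := φ) (B' := φ')
      (fun x hx => (hSder x hx.1).continuousAt.continuousWithinAt)
      (fun x hx => (hSder x hx.1).hasDerivWithinAt)
      (by simpa [hφ_def] using hAS0.trans (le_of_eq (by simp)))
      (fun x hx => by
        have h1x : (0:ℝ) < 1 + x := by have := hx.1; linarith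
        exact (continuousAt_const.mul ((Real.continuousAt_rpow_const (1 + x) (-α)
          (Or.inl (ne_of_gt h1x))).comp
          ((continuous_const.add continuous_id).continuousAt))).continuousWithinAt)
      (fun x hx => (hφderiv x hx).hasDerivWithinAt)
      (fun x hx hSφ => by
        have hx0 : (0:ℝ) ≤ x := hx.1
        have h1x : (0:ℝ) < 1 + x := by linarith
        have hu : (0:ℝ) < (1 + x) ^ (-(α + 1)) := Real.rpow_pos_of_pos h1x _
        have hSp : S x ^ ((1 + r₀) / (2 * r₀)) = A ^ p * (1 + x) ^ (-(α + 1)) := by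
          rw [show (1 + r₀) / (2 * r₀) = p from rfl, hSφ]
          rw [hφ_def]
          rw [Real.mul_rpow hA0.le (Real.rpow_nonneg h1x.le _),
            ← Real.rpow_mul h1x.le]
          congr 1
          rw [neg_mul, hαp]
        have hΓx := hΓ' x hx0
        have hiq := hineq x hx0
        rw [hSp] at hiq
        have hlt : Γ x - C * (A ^ p * (1 + x) ^ (-(α + 1))) <
            A * (-α * (1 + x) ^ (-α - 1)) := by
          have heq : (1 + x) ^ (-α - 1) = (1 + x) ^ (-(α + 1)) := by ring_nf
          rw [heq]
          nlinarith [hu, hCAp, hΓx, mul_le_mul_of_nonneg_right hCAp hu.le]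
        calc S' x ≤ Γ x - C * (A ^ p * (1 + x) ^ (-(α + 1))) := by linarith
          _ < φ' x := hlt)
    exact hcomp (right_mem_Icc.2 hb)
  -- Step 4: conclude
  refine ⟨A, hA0, fun t ht => ?_⟩
  have h1 := key t ht.le
  have h2 : (1 + t) ^ (-α) ≤ t ^ (-α) :=
    Real.rpow_le_rpow_of_nonpos ht (by linarith) (by linarith)
  calc S t ≤ A * (1 + t) ^ (-α) := h1
    _ ≤ A * t ^ (-α) := mul_le_mul_of_nonneg_left h2 hA0.le
    _ = A * t ^ (-(2 * r₀ / (1 - r₀))) := by rw [hα_def]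
end
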